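/- arXiv:2602.07224 — 4 statements merged into one kernel-verified Lean document; each statement's English description precedes it below -/
import Mathlib

section
/- For each n, the matrix W_n = [[0, D_n, 0], [-D_n, 0, γ D_n], [0, -γ D_n, -D_n^2]] (Dirichlet–Neumann modal approximation of the weakly coupled thermoelastic system) has no nonzero purely imaginary eigenvalue: if iβ with β ∈ ℝ, β ≠ 0 is an eigenvalue of W_n (viewed as a complex matrix), then the eigenvector is zero, a contradiction; hence iℝ\{0} ∩ σ(W_n) = ∅. -/
open Matrix

lemma aux_ne (β γ dr : ℝ) (hβ : β ≠ 0) (hγ : γ ≠ 0) (hd : 0 < dr) :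
    (((β:ℂ)*Complex.I)^2 + ((dr:ℂ))^2) * ((β:ℂ)*Complex.I + ((dr:ℂ))^2)
      + (γ:ℂ)^2 * ((β:ℂ)*Complex.I) * ((dr:ℂ))^2 ≠ 0 := by
  have hre : ((((β:ℂ)*Complex.I)^2 + ((dr:ℂ))^2) * ((β:ℂ)*Complex.I + ((dr:ℂ))^2)
      + (γ:ℂ)^2 * ((β:ℂ)*Complex.I) * ((dr:ℂ))^2)
      = ((dr^2*(dr^2-β^2) : ℝ) : ℂ) + ((β*(dr^2-β^2)+γ^2*β*dr^2 : ℝ) : ℂ) * Complex.I := by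
    push_cast
    linear_combination ((β:ℂ)^3*Complex.I + (β:ℂ)^2*(dr:ℂ)^2) * Complex.I_sq
  rw [hre]
  intro h
  rw [Complex.ext_iff] at h
  simp only [Complex.add_re, Complex.add_im, Complex.ofReal_re, Complex.ofReal_im,
    Complex.mul_re, Complex.mul_im, Complex.I_re, Complex.I_im, Complex.zero_re,
    Complex.zero_im] at h
  obtain ⟨ha, hb⟩ := h
  have hdr2 : dr^2 ≠ 0 := pow_ne_zero _ (ne_of_gt hd)
  have hp : dr^2 - β^2 = 0 := by
    rcases mul_eq_zero.mp (by linarith : dr^2*(dr^2-β^2) = 0) with h | h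
    · exact absurd h hdr2
    · exact h
  have : γ^2*β*dr^2 = 0 := by linear_combination hb - β*hp
  rcases mul_eq_zero.mp this with h | h
  · rcases mul_eq_zero.mp h with h | h
    · exact hγ (pow_eq_zero_iff (by norm_num) |>.mp h)
    · exact hβ h
  · exact hdr2 h


/-- The Dirichlet–Neumann modal matrix `W_n = [[0,D],[-D,0,γD],[0,-γD,-D²]]`
(as a complex matrix) has no nonzero purely imaginary eigenvalue. -/
theorem stmt_10 (n : ℕ) (γ : ℝ) (hγ : γ ≠ 0)
    (D : Matrix (Fin n) (Fin n) ℂ)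
    (hD : D = Matrix.diagonal fun j : Fin n => ((j : ℕ) : ℂ) + 1)
    (W : Matrix ((Fin n ⊕ Fin n) ⊕ Fin n) ((Fin n ⊕ Fin n) ⊕ Fin n) ℂ)
    (hW : W = Matrix.fromBlocks
      (Matrix.fromBlocks 0 D (-D) 0)
      (Matrix.fromRows 0 ((γ : ℂ) • D))
      (Matrix.fromCols 0 (-((γ : ℂ) • D)))
      (-(D * D))) :
    ∀ β : ℝ, β ≠ 0 →
      ¬ ∃ z : ((Fin n ⊕ Fin n) ⊕ Fin n) → ℂ,
          z ≠ 0 ∧ W.mulVec z = ((β : ℂ) * Complex.I) • z := by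
  subst hD hW
  intro β hβ
  rintro ⟨z, hz, hWz⟩
  set c : ℂ := (β : ℂ) * Complex.I with hc
  have e1 := fun j => congrFun hWz (Sum.inl (Sum.inl j))
  have e2 := fun j => congrFun hWz (Sum.inl (Sum.inr j))
  have e3 := fun j => congrFun hWz (Sum.inr j)
  simp [Matrix.mulVec, dotProduct, Fintype.sum_sum_type, Matrix.fromBlocks,
    Matrix.fromRows_apply_inl, Matrix.fromRows_apply_inr, Matrix.fromCols, Matrix.diagonal, Matrix.mul_apply,
    Finset.sum_ite_eq, apply_ite] at e1 e2 e3
  apply hz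
  have key : ∀ j : Fin n, z (Sum.inl (Sum.inl j)) = 0 ∧ z (Sum.inl (Sum.inr j)) = 0
      ∧ z (Sum.inr j) = 0 := by
    intro j
    set x := z (Sum.inl (Sum.inl j)) with hx
    set y := z (Sum.inl (Sum.inr j)) with hy
    set t := z (Sum.inr j) with ht
    set dr : ℝ := (j : ℕ) + 1 with hdr
    have hdrpos : 0 < dr := by positivity
    have hdC : ((j : ℕ) : ℂ) + 1 = ((dr : ℝ) : ℂ) := by push_cast [hdr]; ring
    set d : ℂ := ((dr : ℝ) : ℂ) with hdd
    have hd0 : d ≠ 0 := by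
      rw [hdd]
      exact_mod_cast ne_of_gt hdrpos
    have E1 : d * y = c * x := by linear_combination e1 j - y * hdC
    have E2 : -(d * x) + (γ:ℂ) * d * t = c * y := by
      linear_combination e2 j + (x - (γ:ℂ)*t) * hdC
    have E3 : -((γ:ℂ) * d * y) - d^2 * t = c * t := by
      linear_combination e3 j + ((γ:ℂ)*y + t*(d + ((j:ℕ):ℂ) + 1)) * hdC
    have hK : (c^2 + d^2) * (c + d^2) + (γ:ℂ)^2 * c * d^2 ≠ 0 := by
      rw [hc, hdd]; exact aux_ne β γ dr hβ hγ hdrpos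
    have hxK : ((c^2 + d^2) * (c + d^2) + (γ:ℂ)^2 * c * d^2) * x = 0 := by
      linear_combination (-(c+d^2)*c - (γ:ℂ)^2*d^2) * E1 + (-(c+d^2)*d) * E2
        + (-(γ:ℂ)*d^2) * E3
    have hx0 : x = 0 := by
      rcases mul_eq_zero.mp hxK with h | h
      · exact absurd h hK
      · exact h
    have hy0 : y = 0 := by
      have : d * y = 0 := by rw [E1, hx0, mul_zero]
      rcases mul_eq_zero.mp this with h | h
      · exact absurd h hd0
      · exact h
    have ht0 : t = 0 := by
      have hct : (c + d^2) * t = 0 := by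
        linear_combination -E3 - (γ:ℂ) * E1 - (γ:ℂ)*c*hx0
      rcases mul_eq_zero.mp hct with h | h
      · exfalso
        have : (c + d^2).im = 0 := by rw [h]; simp
        rw [hc, hdd] at this
        simp [← Complex.ofReal_pow] at this
        exact hβ this
      · exact h
    exact ⟨hx0, hy0, ht0⟩
  funext k
  rcases k with (j | j) | j
  · exact (key j).1
  · exact (key j).2.1
  · exact (key j).2.2
end

section
/- If iβ (β ∈ ℝ, β ≠ 0) were an eigenvalue of the dissipative block matrix W_n = [[0, D_n, 0], [-D_n, 0, -γI_n], [0, γI_n, -D_n^2]] with unit eigenvector z = (u,v,θ) ∈ ℂ^{3n}, then D_n θ = 0 and hence θ = 0, which forces v = 0 and u = 0; therefore W_n has no purely imaginary eigenvalues other than possibly 0, and in fact 0 is not an eigenvalue either, so iℝ ⊂ ρ(W_n). -/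
open Matrix

open Complex

lemma key_scalar (β γ d : ℝ) (hγ : γ ≠ 0) (hd : d ≠ 0) (u v θ : ℂ)
    (h1 : (β : ℂ) * Complex.I * u - (d : ℂ) * v = 0)
    (h2 : (β : ℂ) * Complex.I * v + (d : ℂ) * u + (γ : ℂ) * θ = 0)
    (h3 : (β : ℂ) * Complex.I * θ - (γ : ℂ) * v + (d : ℂ)^2 * θ = 0) :
    u = 0 ∧ v = 0 ∧ θ = 0 := by
  have hdC : (d : ℂ) ≠ 0 := by exact_mod_cast hd
  have hγC : (γ : ℂ) ≠ 0 := by exact_mod_cast hγ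
  by_cases hβ : β = 0
  · subst hβ
    simp only [Complex.ofReal_zero, zero_mul] at h1 h2 h3
    have hv : v = 0 := by
      simpa [hdC] using h1
    subst hv
    have hθ : θ = 0 := by
      have : (d : ℂ)^2 * θ = 0 := by linear_combination h3
      simpa [pow_eq_zero_iff, hdC] using this
    subst hθ
    refine ⟨?_, rfl, rfl⟩
    have : (d : ℂ) * u = 0 := by linear_combination h2
    simpa [hdC] using this
  · set a : ℂ := (β : ℂ) * Complex.I with ha
    have ha0 : a ≠ 0 := by
      simp [ha, Complex.I_ne_zero, Complex.ofReal_eq_zero, hβ]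
    -- (a²+d²) v + γ a θ = 0
    have e2 : (a^2 + (d:ℂ)^2) * v + (γ:ℂ) * a * θ = 0 := by
      have := congrArg (fun x => a * x) h2
      simp only [mul_zero] at this
      -- a² v + d a u + γ a θ = 0 ; d * (a u) = d * (d v)
      have hau : a * u = (d:ℂ) * v := by linear_combination h1
      linear_combination this - (d:ℂ) * hau
    have e3 : (a + (d:ℂ)^2) * θ = (γ:ℂ) * v := by linear_combination h3
    have ec : ((a^2 + (d:ℂ)^2) * (a + (d:ℂ)^2) + (γ:ℂ)^2 * a) * θ = 0 := by
      have := congrArg (fun x => (a^2 + (d:ℂ)^2) * x) e3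
      linear_combination this + (γ:ℂ) * e2
    have hc : ((a^2 + (d:ℂ)^2) * (a + (d:ℂ)^2) + (γ:ℂ)^2 * a) ≠ 0 := by
      intro hcz
      have hre := congrArg Complex.re hcz
      have him := congrArg Complex.im hcz
      have heq : (a^2 + (d:ℂ)^2) * (a + (d:ℂ)^2) + (γ:ℂ)^2 * a
          = (((d^2 - β^2) * d^2 : ℝ) : ℂ) + ((β * (d^2 - β^2 + γ^2) : ℝ) : ℂ) * Complex.I := by
        have hI := Complex.I_sq
        rw [ha]
        push_cast
        linear_combination ((β:ℂ)^3 * Complex.I + (β:ℂ)^2 * (d:ℂ)^2) * hI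
      rw [heq] at hcz
      obtain ⟨h1', h2'⟩ := Complex.ext_iff.mp hcz
      simp only [Complex.add_re, Complex.add_im, Complex.ofReal_re, Complex.ofReal_im,
        Complex.mul_re, Complex.mul_im, Complex.I_re, Complex.I_im, Complex.zero_re,
        Complex.zero_im, mul_zero, mul_one, zero_mul, sub_zero, add_zero, zero_add] at h1' h2'
      have hd2 : d^2 - β^2 = 0 := by
        have : d^2 ≠ 0 := pow_ne_zero 2 hd
        rcases mul_eq_zero.mp h1' with h | h
        · exact h
        · exact absurd h this
      rw [hd2] at h2'
      simp [hβ, hγ, pow_eq_zero_iff] at h2'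
    have hθ : θ = 0 := by
      rcases mul_eq_zero.mp ec with h | h
      · exact absurd h hc
      · exact h
    subst hθ
    have hv : v = 0 := by
      have : (γ:ℂ) * v = 0 := by linear_combination -e3
      simpa [hγC] using this
    subst hv
    have hu : u = 0 := by
      have : a * u = 0 := by linear_combination h1
      simpa [ha0] using this
    exact ⟨hu, rfl, rfl⟩


/-- For the dissipative block matrix `W_n = [[0,D],[-D,0,-γI],[0,γI,-D²]]`
with `D = diag(1,…,n)` and `γ ≠ 0`, the whole imaginary axis lies in the
resolvent set: `iβ I - W_n` is invertible for every `β ∈ ℝ`. -/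
theorem stmt_11 (n : ℕ) (γ : ℝ) (hγ : γ ≠ 0)
    (D : Matrix (Fin n) (Fin n) ℂ)
    (hD : D = Matrix.diagonal fun j : Fin n => ((j : ℕ) : ℂ) + 1)
    (W : Matrix ((Fin n ⊕ Fin n) ⊕ Fin n) ((Fin n ⊕ Fin n) ⊕ Fin n) ℂ)
    (hW : W = Matrix.fromBlocks
      (Matrix.fromBlocks 0 D (-D) 0)
      (Matrix.fromRows 0 (-((γ : ℂ) • (1 : Matrix (Fin n) (Fin n) ℂ))))
      (Matrix.fromCols 0 ((γ : ℂ) • (1 : Matrix (Fin n) (Fin n) ℂ)))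
      (-(D * D))) :
    ∀ β : ℝ,
      IsUnit (((β : ℂ) * Complex.I) •
        (1 : Matrix ((Fin n ⊕ Fin n) ⊕ Fin n) ((Fin n ⊕ Fin n) ⊕ Fin n) ℂ) - W) := by
  intro β
  rw [Matrix.isUnit_iff_isUnit_det, isUnit_iff_ne_zero]
  intro hdet
  obtain ⟨z, hz0, hz⟩ := (Matrix.exists_mulVec_eq_zero_iff).mpr hdet
  apply hz0
  set u : Fin n → ℂ := fun j => z (Sum.inl (Sum.inl j)) with hu
  set v : Fin n → ℂ := fun j => z (Sum.inl (Sum.inr j)) with hv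
  set θ : Fin n → ℂ := fun j => z (Sum.inr j) with hθ
  have hzd : z = Sum.elim (Sum.elim u v) θ := by
    funext k
    rcases k with (j | j) | j <;> rfl
  rw [hzd, hW, hD, Matrix.sub_mulVec, Matrix.smul_mulVec, Matrix.one_mulVec] at hz
  rw [Matrix.fromBlocks_mulVec] at hz
  simp only [Sum.elim_comp_inl, Sum.elim_comp_inr, Matrix.fromBlocks_mulVec,
    Matrix.fromRows_mulVec, Matrix.fromCols_mulVec_sumElim, Matrix.zero_mulVec,
    Matrix.neg_mulVec, Matrix.smul_mulVec, Matrix.one_mulVec,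
    Matrix.diagonal_mul_diagonal, zero_add, add_zero] at hz
  have key : ∀ j : Fin n, u j = 0 ∧ v j = 0 ∧ θ j = 0 := by
    intro j
    have E1 := congrFun hz (Sum.inl (Sum.inl j))
    have E2 := congrFun hz (Sum.inl (Sum.inr j))
    have E3 := congrFun hz (Sum.inr j)
    simp only [Sum.elim_inl, Sum.elim_inr, Pi.add_apply, Pi.sub_apply, Pi.smul_apply,
      Pi.neg_apply, Pi.zero_apply, Matrix.mulVec_diagonal, smul_eq_mul] at E1 E2 E3
    have hd : ((j : ℕ) : ℝ) + 1 ≠ 0 := by positivity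
    refine key_scalar β γ (((j : ℕ) : ℝ) + 1) hγ hd (u j) (v j) (θ j) ?_ ?_ ?_
    · push_cast
      linear_combination E1
    · push_cast
      linear_combination E2
    · push_cast
      linear_combination E3
  funext k
  rcases k with (j | j) | j
  · exact (key j).1
  · exact (key j).2.1
  · exact (key j).2.2
end

section
/- The matrix W_n = [[0, D_n, 0], [-D_n, 0, γD_n], [0, -γD_n, -D_n^2]] with D_n = diag(1,…,n) is invertible, and its inverse satisfies the uniform bound ‖W_n^{-1}‖_∞ ≤ γ^2 + γ + 1, independent of n. -/
open Matrix

/-- The matrix `W_n = [[0,D],[-D,0,γD],[0,-γD,-D²]]`, `D = diag(1,…,n)`,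
is invertible and its inverse satisfies the uniform max-row-sum bound
`‖W_n⁻¹‖_∞ ≤ γ² + γ + 1`, independently of `n`. -/
theorem stmt_12 (n : ℕ) (γ : ℝ) (hγ : 0 < γ)
    (D : Matrix (Fin n) (Fin n) ℝ)
    (hD : D = Matrix.diagonal fun j : Fin n => ((j : ℕ) : ℝ) + 1)
    (W : Matrix ((Fin n ⊕ Fin n) ⊕ Fin n) ((Fin n ⊕ Fin n) ⊕ Fin n) ℝ)
    (hW : W = Matrix.fromBlocks
      (Matrix.fromBlocks 0 D (-D) 0)
      (Matrix.fromRows 0 (γ • D))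
      (Matrix.fromCols 0 (-(γ • D)))
      (-(D * D))) :
    IsUnit W ∧ ∀ i, ∑ j, |W⁻¹ i j| ≤ γ ^ 2 + γ + 1 := by
  set d : Fin n → ℝ := fun j => ((j : ℕ) : ℝ) + 1 with hd
  have hd1 : ∀ j, (1 : ℝ) ≤ d j := by
    intro j; simp only [hd]; have : (0:ℝ) ≤ ((j:ℕ):ℝ) := Nat.cast_nonneg _; linarith
  have hd0 : ∀ j, d j ≠ 0 := fun j => by have := hd1 j; linarith
  set V : Matrix ((Fin n ⊕ Fin n) ⊕ Fin n) ((Fin n ⊕ Fin n) ⊕ Fin n) ℝ :=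
    Matrix.fromBlocks
      (Matrix.fromBlocks
        (Matrix.diagonal fun j => -(γ ^ 2 / (d j) ^ 2))
        (Matrix.diagonal fun j => -(1 / d j))
        (Matrix.diagonal fun j => 1 / d j) 0)
      (Matrix.fromRows (Matrix.diagonal fun j => -(γ / (d j) ^ 2)) 0)
      (Matrix.fromCols (Matrix.diagonal fun j => -(γ / (d j) ^ 2)) 0)
      (Matrix.diagonal fun j => -(1 / (d j) ^ 2)) with hV
  have hWV : W * V = 1 := by
    subst hW hD
    ext i j
    rcases i with (i | i) | i <;> rcases j with (j | j) | j <;>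
      simp only [hV, Matrix.mul_apply, Fintype.sum_sum_type,
          Matrix.fromBlocks_apply₁₁, Matrix.fromBlocks_apply₁₂,
          Matrix.fromBlocks_apply₂₁, Matrix.fromBlocks_apply₂₂,
          Matrix.fromRows_apply_inl, Matrix.fromRows_apply_inr,
          Matrix.fromCols_apply_inl, Matrix.fromCols_apply_inr,
          Matrix.diagonal_apply, Matrix.zero_apply, Matrix.neg_apply,
          Matrix.smul_apply, Matrix.one_apply, smul_eq_mul,
          mul_ite, ite_mul, mul_zero, zero_mul, neg_zero, mul_neg, neg_neg,
          Finset.sum_ite_eq, Finset.sum_ite_eq', Finset.mem_univ, if_true,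
          Finset.sum_const_zero, add_zero, zero_add, Sum.inl.injEq, Sum.inr.injEq,
          reduceCtorEq, if_false]
    all_goals
      (rcases eq_or_ne i j with rfl | h
       · have h1 : (0:ℝ) < 1 + ((i:ℕ):ℝ) := by positivity
         have h2 : (0:ℝ) < ((i:ℕ):ℝ) + 1 := by positivity
         simp only [eq_self_iff_true, if_true]
         field_simp [h1.ne', h2.ne', hd0 i]
         try ring
       · simp [h])
  have hUnit : IsUnit W := (Matrix.isUnit_iff_isUnit_det W).mpr (Matrix.isUnit_det_of_right_inverse hWV)
  have hInv : W⁻¹ = V := Matrix.inv_eq_right_inv hWV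
  refine ⟨hUnit, fun i => ?_⟩
  rw [hInv]
  have hdiagsum : ∀ (f : Fin n → ℝ) (i : Fin n),
      ∑ j, |Matrix.diagonal f i j| = |f i| := by
    intro f i
    simp only [Matrix.diagonal_apply, apply_ite abs, abs_zero]
    rw [Finset.sum_ite_eq]
    simp
  have hsq : ∀ j, (1:ℝ) ≤ (d j)^2 := by
    intro j; nlinarith [hd1 j]
  have hb1 : ∀ j, γ^2/(d j)^2 ≤ γ^2 := fun j =>
    div_le_self (by positivity) (hsq j)
  have hb2 : ∀ j, 1/(d j) ≤ 1 := fun j =>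
    div_le_self (by norm_num) (hd1 j)
  have hb3 : ∀ j, γ/(d j)^2 ≤ γ := fun j =>
    div_le_self hγ.le (hsq j)
  have hb4 : ∀ j, 1/(d j)^2 ≤ 1 := fun j =>
    div_le_self (by norm_num) (hsq j)
  rcases i with (i | i) | i
  · rw [Fintype.sum_sum_type, Fintype.sum_sum_type]
    simp only [hV, Matrix.fromBlocks_apply₁₁, Matrix.fromBlocks_apply₁₂,
      Matrix.fromBlocks_apply₂₁, Matrix.fromBlocks_apply₂₂,
      Matrix.fromRows_apply_inl, Matrix.fromRows_apply_inr,
      Matrix.fromCols_apply_inl, Matrix.fromCols_apply_inr, Matrix.zero_apply,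
      hdiagsum, abs_zero, Finset.sum_const_zero, add_zero, zero_add, abs_neg]
    rw [abs_of_nonneg (by positivity : (0:ℝ) ≤ γ^2/(d i)^2),
      abs_of_nonneg (by positivity : (0:ℝ) ≤ 1/(d i)),
      abs_of_nonneg (by positivity : (0:ℝ) ≤ γ/(d i)^2)]
    have := hb1 i; have := hb2 i; have := hb3 i
    linarith
  · rw [Fintype.sum_sum_type, Fintype.sum_sum_type]
    simp only [hV, Matrix.fromBlocks_apply₁₁, Matrix.fromBlocks_apply₁₂,
      Matrix.fromBlocks_apply₂₁, Matrix.fromBlocks_apply₂₂,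
      Matrix.fromRows_apply_inl, Matrix.fromRows_apply_inr,
      Matrix.fromCols_apply_inl, Matrix.fromCols_apply_inr, Matrix.zero_apply,
      hdiagsum, abs_zero, Finset.sum_const_zero, add_zero, zero_add, abs_neg]
    rw [abs_of_nonneg (by positivity : (0:ℝ) ≤ 1/(d i))]
    have := hb2 i
    nlinarith [sq_nonneg γ]
  · rw [Fintype.sum_sum_type, Fintype.sum_sum_type]
    simp only [hV, Matrix.fromBlocks_apply₁₁, Matrix.fromBlocks_apply₁₂,
      Matrix.fromBlocks_apply₂₁, Matrix.fromBlocks_apply₂₂,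
      Matrix.fromRows_apply_inl, Matrix.fromRows_apply_inr,
      Matrix.fromCols_apply_inl, Matrix.fromCols_apply_inr, Matrix.zero_apply,
      hdiagsum, abs_zero, Finset.sum_const_zero, add_zero, zero_add, abs_neg]
    rw [abs_of_nonneg (by positivity : (0:ℝ) ≤ γ/(d i)^2),
      abs_of_nonneg (by positivity : (0:ℝ) ≤ 1/(d i)^2)]
    have := hb3 i; have := hb4 i
    nlinarith [sq_nonneg γ]
end

section
/- The 4×4 determinant with rows (a, -a, b, -b), (a e^{aπ}, -a e^{-aπ}, b e^{bπ}, -b e^{-bπ}), (l, -l, m, -m), (l e^{aπ}, -l e^{-aπ}, m e^{bπ}, -m e^{-bπ}) factors as (am - bl)^2 · (e^{(a+b)π} + e^{-(a+b)π} - e^{(a-b)π} - e^{(b-a)π}) up to a nonzero constant; in particular it vanishes if and only if am = bl or cosh((a+b)π) = cosh((a-b)π). -/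
set_option maxHeartbeats 1000000 in
lemma det4_aux (a b c d e f g h i j k l m n o p : ℂ) :
    Matrix.det !![a,b,c,d; e,f,g,h; i,j,k,l; m,n,o,p] =
      a*f*k*p - a*f*l*o - a*g*j*p + a*g*l*n + a*h*j*o - a*h*k*n
      - b*e*k*p + b*e*l*o + b*g*i*p - b*g*l*m - b*h*i*o + b*h*k*m
      + c*e*j*p - c*e*l*n - c*f*i*p + c*f*l*m + c*h*i*n - c*h*j*m
      - d*e*j*o + d*e*k*n + d*f*i*o - d*f*k*m - d*g*i*n + d*g*j*m := by
  simp [Matrix.det_succ_row_zero, Fin.sum_univ_succ, Fin.succAbove,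
    Fin.castSucc, Fin.castAdd, Fin.castLE]
  ring

set_option maxHeartbeats 1000000 in
/-- The Neumann–Neumann characteristic determinant factors as
`(am - bl)² (e^{(a+b)π} + e^{-(a+b)π} - e^{(a-b)π} - e^{(b-a)π})`; in
particular it vanishes iff `am = bl` or `cosh((a+b)π) = cosh((a-b)π)`. -/
theorem stmt_17 (a b l m : ℂ) :
    Matrix.det
      !![a, -a, b, -b;
         a * Complex.exp (a * Real.pi), -(a * Complex.exp (-(a * Real.pi))),
           b * Complex.exp (b * Real.pi), -(b * Complex.exp (-(b * Real.pi)));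
         l, -l, m, -m;
         l * Complex.exp (a * Real.pi), -(l * Complex.exp (-(a * Real.pi))),
           m * Complex.exp (b * Real.pi), -(m * Complex.exp (-(b * Real.pi)))]
      = (a * m - b * l) ^ 2 *
        (Complex.exp ((a + b) * Real.pi) + Complex.exp (-((a + b) * Real.pi))
          - Complex.exp ((a - b) * Real.pi) - Complex.exp ((b - a) * Real.pi))
    ∧ (Matrix.det
      !![a, -a, b, -b;
         a * Complex.exp (a * Real.pi), -(a * Complex.exp (-(a * Real.pi))),
           b * Complex.exp (b * Real.pi), -(b * Complex.exp (-(b * Real.pi)));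
         l, -l, m, -m;
         l * Complex.exp (a * Real.pi), -(l * Complex.exp (-(a * Real.pi))),
           m * Complex.exp (b * Real.pi), -(m * Complex.exp (-(b * Real.pi)))] = 0
      ↔ a * m = b * l ∨
        Complex.cosh ((a + b) * Real.pi) = Complex.cosh ((a - b) * Real.pi)) := by
  have hA := Complex.exp_ne_zero (a * (Real.pi : ℂ))
  have hB := Complex.exp_ne_zero (b * (Real.pi : ℂ))
  have e1 : ((a + b : ℂ)) * (Real.pi : ℂ) = a * Real.pi + b * Real.pi := by ring
  have e2 : ((a - b : ℂ)) * (Real.pi : ℂ) = a * Real.pi - b * Real.pi := by ring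
  have e3 : ((b - a : ℂ)) * (Real.pi : ℂ) = -(a * Real.pi - b * Real.pi) := by ring
  have key : Matrix.det
      !![a, -a, b, -b;
         a * Complex.exp (a * Real.pi), -(a * Complex.exp (-(a * Real.pi))),
           b * Complex.exp (b * Real.pi), -(b * Complex.exp (-(b * Real.pi)));
         l, -l, m, -m;
         l * Complex.exp (a * Real.pi), -(l * Complex.exp (-(a * Real.pi))),
           m * Complex.exp (b * Real.pi), -(m * Complex.exp (-(b * Real.pi)))]
      = (a * m - b * l) ^ 2 *
        (Complex.exp ((a + b) * Real.pi) + Complex.exp (-((a + b) * Real.pi))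
          - Complex.exp ((a - b) * Real.pi) - Complex.exp ((b - a) * Real.pi)) := by
    have h1 : Complex.exp (a * (Real.pi : ℂ) + b * Real.pi)
        = Complex.exp (a * Real.pi) * Complex.exp (b * Real.pi) := Complex.exp_add _ _
    have h2 : Complex.exp (-(a * (Real.pi : ℂ) + b * Real.pi))
        = Complex.exp (-(a * Real.pi)) * Complex.exp (-(b * Real.pi)) := by
      rw [← Complex.exp_add]; congr 1; try ring
    have h3 : Complex.exp (a * (Real.pi : ℂ) - b * Real.pi)
        = Complex.exp (a * Real.pi) * Complex.exp (-(b * Real.pi)) := by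
      rw [← Complex.exp_add]; congr 1; try ring
    have h4 : Complex.exp (-(a * (Real.pi : ℂ) - b * Real.pi))
        = Complex.exp (-(a * Real.pi)) * Complex.exp (b * Real.pi) := by
      rw [← Complex.exp_add]; congr 1; try ring
    rw [det4_aux, e1, e2, e3, h1, h2, h3, h4]
    ring
  refine ⟨key, ?_⟩
  rw [key, mul_eq_zero, pow_eq_zero_iff (two_ne_zero), sub_eq_zero]
  have hc : Complex.cosh ((a + b) * Real.pi) = Complex.cosh ((a - b) * Real.pi) ↔
      Complex.exp ((a + b) * Real.pi) + Complex.exp (-((a + b) * Real.pi))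
        - Complex.exp ((a - b) * Real.pi) - Complex.exp ((b - a) * Real.pi) = 0 := by
    rw [e1, e2, e3, Complex.cosh, Complex.cosh]
    constructor
    · intro h; linear_combination 2 * h
    · intro h; linear_combination h / 2
  rw [hc]
end
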